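/- Let A_0, A_1, …, A_d be the adjacency matrices of a commutative association scheme on a finite set Ω with |Ω| = n. Let E_0, …, E_d ∈ ℂ^{Ω×Ω} be Hermitian matrices with E_i·E_j = δ_{ij}·E_i for all i, j; suppose E_i = Σ_{r=0}^d Q_{ri}·A_r for a complex (d+1)×(d+1) matrix Q (the second eigenmatrix); suppose E_i ∘ E_j = (1/n)·Σ_{ℓ=0}^d q_{ij}^ℓ·E_ℓ for complex numbers q_{ij}^ℓ (the Krein parameters), where ∘ is the entrywise (Schur) product; and suppose tr(E_k) is a positive real number for every k. Then for all 0 ≤ i, j, k ≤ d: q_{ij}^k = 0 if and only if Σ_{r,s,t=0}^d Q_{ri}·Q_{sj}·conj(Q_{tk})·[r s t]_{u,v,w} = 0 for all u, v, w ∈ Ω. -/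
import Mathlib


open scoped BigOperators
open Matrix

noncomputable section

open scoped ComplexOrder in
private lemma ctm_aux {m n : Type*} [Fintype m] (B : Matrix m n ℂ)
    (h : Bᴴ * B = 0) : B = 0 :=
  Matrix.conjTranspose_mul_self_eq_zero.mp h


/-- **Vanishing Krein parameters via triple intersection numbers** (a
generalisation of Coolsaet–Jurišić to arbitrary commutative association
schemes): `q_{ij}^k = 0` iff
`Σ_{r,s,t} Q_{ri}·Q_{sj}·conj(Q_{tk})·[r s t]_{u,v,w} = 0` for all `u,v,w`. -/
theorem stmt11 {Ω : Type*} [Fintype Ω] [DecidableEq Ω] (d : ℕ)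
    (A : Fin (d + 1) → Matrix Ω Ω ℂ)
    (h01 : ∀ r u x, A r u x = 0 ∨ A r u x = 1)
    (hA0 : A 0 = 1)
    (hJ : ∑ r : Fin (d + 1), A r = Matrix.of fun _ _ => (1 : ℂ))
    (htrans : ∀ r : Fin (d + 1), ∃ s : Fin (d + 1), (A r)ᵀ = A s)
    (hcomm : ∀ r s : Fin (d + 1), A r * A s = A s * A r)
    (hclosed : ∀ r s : Fin (d + 1), ∃ coef : Fin (d + 1) → ℂ,
        A r * A s = ∑ ℓ : Fin (d + 1), coef ℓ • A ℓ)
    (E : Fin (d + 1) → Matrix Ω Ω ℂ)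
    (hherm : ∀ i, (E i)ᴴ = E i)
    (horth : ∀ i j : Fin (d + 1), E i * E j = if i = j then E i else 0)
    (Q : Fin (d + 1) → Fin (d + 1) → ℂ)
    (hQ : ∀ i : Fin (d + 1), E i = ∑ r : Fin (d + 1), Q r i • A r)
    (q : Fin (d + 1) → Fin (d + 1) → Fin (d + 1) → ℂ)
    (hKrein : ∀ i j : Fin (d + 1),
        (E i).hadamard (E j) =
          ((Fintype.card Ω : ℂ))⁻¹ • ∑ ℓ : Fin (d + 1), q i j ℓ • E ℓ)
    (htr : ∀ k : Fin (d + 1), 0 < ((E k).trace).re ∧ ((E k).trace).im = 0) :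
    ∀ i j k : Fin (d + 1),
      q i j k = 0 ↔
        ∀ u v w : Ω,
          (∑ r : Fin (d + 1), ∑ s : Fin (d + 1), ∑ t : Fin (d + 1),
            Q r i * Q s j * (starRingEnd ℂ) (Q t k) *
              (∑ x : Ω, A r u x * A s v x * A t w x)) = 0 := by
  intro i j k
  classical
  have hcard0 : Fintype.card Ω ≠ 0 := by
    intro h
    have hemp : IsEmpty Ω := Fintype.card_eq_zero_iff.mp h
    have := (htr k).1
    simp [Matrix.trace, Matrix.diag, Finset.univ_eq_empty] at this
  have hcard : (Fintype.card Ω : ℂ) ≠ 0 := Nat.cast_ne_zero.mpr hcard0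
  have htrne : (E k).trace ≠ 0 := by
    intro h
    have := (htr k).1
    rw [h] at this
    simp at this
  have hAreal : ∀ (r : Fin (d+1)) (u x : Ω), (starRingEnd ℂ) (A r u x) = A r u x := by
    intro r u x; rcases h01 r u x with h | h <;> simp [h]
  have hEentry : ∀ (m : Fin (d+1)) (u x : Ω), E m u x = ∑ r, Q r m * A r u x := by
    intro m u x
    rw [hQ m]
    simp [Matrix.sum_apply]
  have hEconj : ∀ (m : Fin (d+1)) (w x : Ω), (starRingEnd ℂ) (E m w x) = E m x w := by
    intro m w x
    have := congrFun (congrFun (hherm m) x) w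
    rw [Matrix.conjTranspose_apply] at this
    rw [← this]
    rfl
  have swap4 : ∀ (f : Fin (d+1) → Fin (d+1) → Fin (d+1) → Ω → ℂ),
      (∑ r, ∑ s, ∑ t, ∑ x, f r s t x) = ∑ x, ∑ r, ∑ s, ∑ t, f r s t x := by
    intro f
    calc (∑ r, ∑ s, ∑ t, ∑ x, f r s t x)
        = ∑ r, ∑ s, ∑ x, ∑ t, f r s t x :=
          Finset.sum_congr rfl fun r _ => Finset.sum_congr rfl fun s _ => Finset.sum_comm
      _ = ∑ r, ∑ x, ∑ s, ∑ t, f r s t x :=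
          Finset.sum_congr rfl fun r _ => Finset.sum_comm
      _ = ∑ x, ∑ r, ∑ s, ∑ t, f r s t x := Finset.sum_comm
  have expand : ∀ (a b c : Fin (d+1) → ℂ),
      (∑ r, a r) * (∑ s, b s) * (∑ t, c t) = ∑ r, ∑ s, ∑ t, a r * b s * c t := by
    intro a b c
    rw [Finset.sum_mul_sum, Finset.sum_mul]
    refine Finset.sum_congr rfl fun r _ => ?_
    rw [Finset.sum_mul]
    refine Finset.sum_congr rfl fun s _ => ?_
    rw [Finset.mul_sum]
  -- key rewriting of the triple sum
  have hS : ∀ u v w : Ω,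
      (∑ r : Fin (d + 1), ∑ s : Fin (d + 1), ∑ t : Fin (d + 1),
            Q r i * Q s j * (starRingEnd ℂ) (Q t k) *
              (∑ x : Ω, A r u x * A s v x * A t w x))
        = ∑ x : Ω, E i u x * E j v x * E k x w := by
    intro u v w
    calc (∑ r : Fin (d + 1), ∑ s : Fin (d + 1), ∑ t : Fin (d + 1),
            Q r i * Q s j * (starRingEnd ℂ) (Q t k) *
              (∑ x : Ω, A r u x * A s v x * A t w x))
        = ∑ r : Fin (d+1), ∑ s : Fin (d+1), ∑ t : Fin (d+1), ∑ x : Ω,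
            Q r i * Q s j * (starRingEnd ℂ) (Q t k) *
              (A r u x * A s v x * A t w x) := by
          simp only [Finset.mul_sum]
      _ = ∑ x : Ω, ∑ r : Fin (d+1), ∑ s : Fin (d+1), ∑ t : Fin (d+1),
            Q r i * Q s j * (starRingEnd ℂ) (Q t k) *
              (A r u x * A s v x * A t w x) := swap4 _
      _ = ∑ x : Ω, (∑ r : Fin (d+1), Q r i * A r u x) *
            (∑ s : Fin (d+1), Q s j * A s v x) *
            (∑ t : Fin (d+1), (starRingEnd ℂ) (Q t k) * A t w x) := by
          refine Finset.sum_congr rfl fun x _ => ?_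
          rw [expand]
          refine Finset.sum_congr rfl fun r _ => ?_
          refine Finset.sum_congr rfl fun s _ => ?_
          refine Finset.sum_congr rfl fun t _ => ?_
          ring
      _ = ∑ x : Ω, E i u x * E j v x * E k x w := by
          refine Finset.sum_congr rfl fun x _ => ?_
          rw [← hEentry i u x, ← hEentry j v x]
          congr 1
          rw [← hEconj k w x, hEentry k w x, map_sum]
          refine Finset.sum_congr rfl fun t _ => ?_
          rw [_root_.map_mul, hAreal]
  -- the auxiliary matrix X
  set X : Matrix (Ω × Ω) Ω ℂ := Matrix.of (fun p x => E i p.1 x * E j p.2 x) with hX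
  have hXE : ∀ u v w : Ω, (X * E k) (u, v) w = ∑ x : Ω, E i u x * E j v x * E k x w := by
    intro u v w
    simp [Matrix.mul_apply, hX, mul_assoc]
  have hXhX : Xᴴ * X = (E i).hadamard (E j) := by
    ext x y
    have hEi : (∑ u : Ω, (starRingEnd ℂ) (E i u x) * E i u y) = E i x y := by
      have h2 : E i * E i = E i := by simpa using horth i i
      calc (∑ u : Ω, (starRingEnd ℂ) (E i u x) * E i u y)
          = ∑ u : Ω, E i x u * E i u y := by
            refine Finset.sum_congr rfl fun u _ => ?_
            rw [hEconj]
        _ = (E i * E i) x y := (Matrix.mul_apply).symm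
        _ = E i x y := by rw [h2]
    have hEj : (∑ v : Ω, (starRingEnd ℂ) (E j v x) * E j v y) = E j x y := by
      have h2 : E j * E j = E j := by simpa using horth j j
      calc (∑ v : Ω, (starRingEnd ℂ) (E j v x) * E j v y)
          = ∑ v : Ω, E j x v * E j v y := by
            refine Finset.sum_congr rfl fun v _ => ?_
            rw [hEconj]
        _ = (E j * E j) x y := (Matrix.mul_apply).symm
        _ = E j x y := by rw [h2]
    have step : (Xᴴ * X) x y = ∑ u : Ω, ∑ v : Ω,
        ((starRingEnd ℂ) (E i u x) * E i u y) * ((starRingEnd ℂ) (E j v x) * E j v y) := by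
      rw [Matrix.mul_apply, Fintype.sum_prod_type]
      refine Finset.sum_congr rfl fun u _ => Finset.sum_congr rfl fun v _ => ?_
      simp only [Matrix.conjTranspose_apply, hX, Matrix.of_apply, star_mul', starRingEnd_apply]
      ring
    rw [step, ← Finset.sum_mul_sum, hEi, hEj]
    simp [Matrix.hadamard]
  -- the central product identity
  have hEkMEk : E k * ((E i).hadamard (E j)) * E k
      = ((Fintype.card Ω : ℂ))⁻¹ • (q i j k • E k) := by
    rw [hKrein i j]
    rw [Matrix.mul_smul, Matrix.smul_mul]
    congr 1
    rw [Finset.mul_sum, Finset.sum_mul]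
    rw [Finset.sum_eq_single k]
    · rw [Matrix.mul_smul, Matrix.smul_mul, horth k k, if_pos rfl, horth k k, if_pos rfl]
    · intro ℓ _ hℓ
      rw [Matrix.mul_smul, Matrix.smul_mul, horth k ℓ, if_neg (Ne.symm hℓ)]
      simp
    · intro h; exact absurd (Finset.mem_univ k) h
  constructor
  · -- forward direction
    intro hq u v w
    have hzero : (X * E k)ᴴ * (X * E k) = 0 := by
      rw [Matrix.conjTranspose_mul, hherm k]
      calc E k * Xᴴ * (X * E k) = E k * (Xᴴ * X) * E k := by
            rw [Matrix.mul_assoc, Matrix.mul_assoc, Matrix.mul_assoc]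
        _ = ((Fintype.card Ω : ℂ))⁻¹ • (q i j k • E k) := by
            rw [hXhX]; exact hEkMEk
        _ = 0 := by rw [hq]; simp
    have hXEk : X * E k = 0 := ctm_aux _ hzero
    rw [hS u v w, ← hXE u v w, hXEk]
    simp
  · -- backward direction
    intro H
    have hdiag : (∑ u : Ω, ∑ x : Ω, E i u x * E j u x * E k x u) = 0 := by
      refine Finset.sum_eq_zero fun u _ => ?_
      rw [← hS u u u]; exact H u u u
    have htr2 : (∑ u : Ω, ∑ x : Ω, E i u x * E j u x * E k x u)
        = ((Fintype.card Ω : ℂ))⁻¹ * (q i j k * (E k).trace) := by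
      calc (∑ u : Ω, ∑ x : Ω, E i u x * E j u x * E k x u)
          = ∑ u : Ω, ∑ x : Ω, ((E i).hadamard (E j)) u x * E k x u := by
            refine Finset.sum_congr rfl fun u _ => Finset.sum_congr rfl fun x _ => ?_
            simp [Matrix.hadamard]
        _ = (((E i).hadamard (E j)) * E k).trace := by
            simp [Matrix.trace, Matrix.diag, Matrix.mul_apply]
        _ = ((((Fintype.card Ω : ℂ))⁻¹ • ∑ ℓ : Fin (d+1), q i j ℓ • E ℓ) * E k).trace := by
            rw [hKrein i j]
        _ = ((Fintype.card Ω : ℂ))⁻¹ * (q i j k * (E k).trace) := by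
            rw [Matrix.smul_mul, Matrix.trace_smul, Finset.sum_mul, Matrix.trace_sum]
            rw [Finset.sum_eq_single k]
            · rw [Matrix.smul_mul, horth k k, if_pos rfl, Matrix.trace_smul]
              simp [smul_eq_mul]
            · intro ℓ _ hℓ
              rw [Matrix.smul_mul, horth ℓ k, if_neg hℓ]
              simp
            · intro h; exact absurd (Finset.mem_univ k) h
    rw [hdiag] at htr2
    rcases mul_eq_zero.mp htr2.symm with h | h
    · exact absurd h (inv_ne_zero hcard)
    · rcases mul_eq_zero.mp h with h | h
      · exact h
      · exact absurd h htrne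

end
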